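/- Let p be an odd prime, let k be a natural number, and let l be a natural number with l ≤ p-1. Then in ℤ/pℤ: ∑_{α=1}^{p-1} α^{2(k+1)} · ((α² - 1)/2)^l · (l!)^{-1} = ∑_{q=0}^{l} (-1)^{l-q} · (2^l · q! · (l-q)!)^{-1} · ε_p(2(k+q+1)), where (α²-1)/2 means (α²-1)·2^{-1} in ℤ/pℤ and all factorials appearing are invertible in ℤ/pℤ. -/

import Mathlib

open Finset

lemma sum_range_zmod (p : ℕ) [NeZero p] (f : ZMod p → ZMod p) :
    ∑ i ∈ Finset.range p, f i = ∑ x : ZMod p, f x :=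
  Finset.sum_nbij' (fun i => (i : ZMod p)) (fun x => x.val)
    (fun a _ => Finset.mem_univ _)
    (fun x _ => Finset.mem_range.2 (ZMod.val_lt x))
    (fun a ha => ZMod.val_cast_of_lt (Finset.mem_range.1 ha))
    (fun x _ => by simp [ZMod.natCast_val, ZMod.cast_id])
    (fun a _ => rfl)

lemma key_eps (p m : ℕ) (hp : p.Prime) (hm : 0 < m) :
    ∑ α ∈ Finset.Icc 1 (p - 1), ((α : ZMod p)) ^ m
      = if (p - 1) ∣ m then (-1 : ZMod p) else 0 := by
  classical
  haveI : Fact p.Prime := ⟨hp⟩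
  have hp1 : 1 ≤ p := hp.one_lt.le
  have h1 : Finset.range p = insert 0 (Finset.Icc 1 (p - 1)) := by
    ext a
    simp only [Finset.mem_range, Finset.mem_insert, Finset.mem_Icc]
    omega
  have h2 : ∑ α ∈ Finset.Icc 1 (p - 1), ((α : ZMod p)) ^ m
      = ∑ x : ZMod p, x ^ m := by
    rw [← sum_range_zmod p (fun x => x ^ m), h1, Finset.sum_insert (by simp)]
    simp [zero_pow hm.ne']
  rw [h2]
  have h3 : ∑ x : ZMod p, x ^ m = ∑ x : (ZMod p)ˣ, (x : ZMod p) ^ m := by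
    let φ : (ZMod p)ˣ ↪ ZMod p := ⟨fun x ↦ x, Units.val_injective⟩
    have huniv : Finset.univ.map φ = Finset.univ \ {0} := by
      ext x
      simpa only [Finset.mem_map, Finset.mem_univ, Function.Embedding.coeFn_mk, true_and,
        Finset.mem_sdiff, Finset.mem_singleton, φ, IsUnit, ne_eq] using isUnit_iff_ne_zero
    calc ∑ x : ZMod p, x ^ m = ∑ x ∈ Finset.univ \ {(0 : ZMod p)}, x ^ m := by
          rw [← Finset.sum_sdiff (({0} : Finset (ZMod p)).subset_univ), Finset.sum_singleton,
            zero_pow hm.ne', add_zero]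
      _ = ∑ x : (ZMod p)ˣ, (x : ZMod p) ^ m := by
          rw [← huniv, Finset.sum_map]; rfl
  rw [h3, FiniteField.sum_pow_units, ZMod.card]

/-- The central mod-`p` computation in the strong Fermat limit theorem: for an
odd prime `p`, `k : ℕ` and `l ≤ p-1`, in `ℤ/pℤ`:
`∑_{α=1}^{p-1} α^{2(k+1)} ((α²-1)/2)^l (l!)⁻¹
  = ∑_{q=0}^{l} (-1)^{l-q} (2^l q! (l-q)!)⁻¹ ε_p(2(k+q+1))`
where `ε_p(m) = -1` if `p-1 ∣ m` and `0` otherwise. -/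
theorem fermat_limit_central_sum (p k l : ℕ) (hp : p.Prime) (hodd : Odd p)
    (hl : l ≤ p - 1) :
    ∑ α ∈ Finset.Icc 1 (p - 1),
        ((α : ZMod p)) ^ (2 * (k + 1)) * (((α : ZMod p) ^ 2 - 1) * (2 : ZMod p)⁻¹) ^ l *
          ((l.factorial : ZMod p))⁻¹ =
      ∑ q ∈ Finset.range (l + 1),
        (-1 : ZMod p) ^ (l - q) *
          (((2 ^ l * q.factorial * (l - q).factorial : ℕ) : ZMod p))⁻¹ *
          (if (p - 1) ∣ 2 * (k + q + 1) then (-1 : ZMod p) else 0) := by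
  classical
  haveI : Fact p.Prime := ⟨hp⟩
  have hlp : l < p := by
    have := hp.two_le; omega
  have hfac : ∀ n : ℕ, n < p → ((n.factorial : ZMod p)) ≠ 0 := by
    intro n hn
    rw [Ne, ZMod.natCast_eq_zero_iff]
    intro hdvd
    exact absurd (hp.dvd_factorial.mp hdvd) (by omega)
  have h2ne : (2 : ZMod p) ≠ 0 := by
    have : ((2 : ℕ) : ZMod p) ≠ 0 := by
      rw [Ne, ZMod.natCast_eq_zero_iff]
      intro h
      have h2 := Nat.le_of_dvd (by norm_num) h
      rcases hodd with ⟨t, ht⟩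
      have := hp.two_le
      omega
    simpa using this
  have expand : ∀ α : ZMod p,
      α ^ (2 * (k + 1)) * ((α ^ 2 - 1) * (2 : ZMod p)⁻¹) ^ l * ((l.factorial : ZMod p))⁻¹
        = ∑ q ∈ Finset.range (l + 1),
            ((-1 : ZMod p) ^ (l - q) * ((l.choose q : ZMod p)) * ((2 : ZMod p)⁻¹) ^ l *
              ((l.factorial : ZMod p))⁻¹) * α ^ (2 * (k + q + 1)) := by
    intro α
    rw [mul_pow, sub_pow, Finset.sum_mul, Finset.mul_sum, Finset.sum_mul]
    apply Finset.sum_congr rfl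
    intro q hq
    rw [Finset.mem_range] at hq
    have hsign : (-1 : ZMod p) ^ (q + l) = (-1 : ZMod p) ^ (l - q) := by
      rw [show q + l = (l - q) + 2 * q by omega, pow_add, pow_mul]
      simp
    rw [one_pow, hsign, show 2 * (k + q + 1) = 2 * (k + 1) + 2 * q from by ring, pow_add,
      pow_mul]
    ring
  simp only [expand]
  rw [Finset.sum_comm]
  apply Finset.sum_congr rfl
  intro q hq
  rw [Finset.mem_range] at hq
  have hql : q ≤ l := by omega
  rw [← Finset.mul_sum, key_eps p _ hp (by omega)]
  have hfacl := hfac l hlp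
  have hfacq := hfac q (by omega)
  have hfaclq := hfac (l - q) (by omega)
  have hchoose : (l.factorial : ZMod p)
      = (l.choose q : ZMod p) * q.factorial * (l - q).factorial := by
    rw [← Nat.cast_mul, ← Nat.cast_mul, Nat.choose_mul_factorial_mul_factorial hql]
  have hchne : (l.choose q : ZMod p) ≠ 0 := by
    intro h
    rw [h, zero_mul, zero_mul] at hchoose
    exact hfacl hchoose
  have hCL : (l.choose q : ZMod p) * ((l.factorial : ZMod p))⁻¹
      = ((q.factorial : ZMod p))⁻¹ * (((l - q).factorial : ZMod p))⁻¹ := by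
    field_simp
    rw [hchoose]
  have hcast : (((2 ^ l * q.factorial * (l - q).factorial : ℕ)) : ZMod p)⁻¹
      = ((2 : ZMod p)⁻¹) ^ l * ((q.factorial : ZMod p))⁻¹ * (((l - q).factorial : ZMod p))⁻¹ := by
    push_cast
    rw [mul_inv, mul_inv, inv_pow]
  rw [hcast]
  linear_combination ((-1 : ZMod p) ^ (l - q) * ((2 : ZMod p)⁻¹) ^ l *
    (if (p - 1) ∣ 2 * (k + q + 1) then (-1 : ZMod p) else 0)) * hCL
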